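/- For a state assignment state : V → {In, Out} on a graph G, if no vertex is enabled by rule R1 (i.e., there is no v with state(v)=Out such that all u ∈ N(v) satisfy state(u)=Out and exp(u)=0) and no vertex is enabled by rule R2 (i.e., there is no v with state(v)=In having some neighbor u with state(u)=In or exp(u)>1), where exp(u) = |{w ∈ N(u) : state(w)=In}|, then the set S = {v : state(v)=In} is a distance-2 independent set. -/

import Mathlib

variable {V : Type*} [Fintype V] [DecidableEq V]

/-- `S` is a distance-2 independent set: any two distinct vertices of `S`
are at graph distance strictly greater than 2. -/
def Dist2Indep (G : SimpleGraph V) (S : Set V) : Prop :=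
  ∀ u ∈ S, ∀ v ∈ S, u ≠ v → 2 < G.edist u v

/-- `exp G s u` counts the neighbors of `u` whose state is `In` (`true`). -/
def expIn (G : SimpleGraph V) [DecidableRel G.Adj] (s : V → Bool) (u : V) : ℕ :=
  ((G.neighborFinset u).filter (fun w => s w = true)).card

/-- Guard of rule R1 at `v`: `v` is Out and every neighbor is Out with exp 0. -/
def R1guard (G : SimpleGraph V) [DecidableRel G.Adj] (s : V → Bool) (v : V) : Prop :=
  s v = false ∧ ∀ u ∈ G.neighborSet v, s u = false ∧ expIn G s u = 0

/-- Guard of rule R2 at `v`: `v` is In and some neighbor is In or has exp > 1. -/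
def R2guard (G : SimpleGraph V) [DecidableRel G.Adj] (s : V → Bool) (v : V) : Prop :=
  s v = true ∧ ∃ u ∈ G.neighborSet v, s u = true ∨ 1 < expIn G s u

theorem stmt_4 (G : SimpleGraph V) [DecidableRel G.Adj] (s : V → Bool)
    (h1 : ¬ ∃ v, R1guard G s v) (h2 : ¬ ∃ v, R2guard G s v) :
    Dist2Indep G {v | s v = true} := by
  intro u hu v hv hne
  by_contra hle
  push_neg at hle
  have hne_top : G.edist u v ≠ ⊤ := fun h => by simp [h] at hle
  obtain ⟨p, hp⟩ := SimpleGraph.exists_walk_of_edist_ne_top hne_top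
  have hlen : (p.length : ℕ∞) ≤ 2 := by rw [hp]; exact hle
  have hlen2 : p.length ≤ 2 := by exact_mod_cast hlen
  cases p with
  | nil => exact hne rfl
  | cons hadj q =>
    rename_i w
    cases q with
    | nil =>
      -- u adjacent to v
      exact h2 ⟨u, hu, v, hadj, Or.inl hv⟩
    | cons hadj2 q2 =>
      rename_i x
      have hq2 : q2.length = 0 := by
        simp only [SimpleGraph.Walk.length_cons] at hlen2; omega
      simp only [Set.mem_setOf_eq] at hu hv
      have hx : x = v := SimpleGraph.Walk.eq_of_length_eq_zero hq2
      subst hx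
      have huw : u ∈ (G.neighborFinset w).filter (fun z => s z = true) := by
        simp [SimpleGraph.mem_neighborFinset, hadj.symm, hu]
      have hvw : x ∈ (G.neighborFinset w).filter (fun z => s z = true) := by
        simp [SimpleGraph.mem_neighborFinset, hadj2, hv]
      have hexp : 1 < expIn G s w :=
        Finset.one_lt_card.mpr ⟨u, huw, x, hvw, hne⟩
      exact h2 ⟨u, hu, w, hadj, Or.inr hexp⟩
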